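/- Let X be the stochastic Volterra Ornstein-Uhlenbeck process X_t = x_0 + ∫_0^t ((t−s)^(α−1)/Γ(α))(κ_1 + κ_2 X_s) ds + σ ∫_0^t ((t−s)^(α−1)/Γ(α)) dW_s with α ∈ (1/2,1]. Then E[X_t] = x_0 · E_α(κ_2 t^α) + (κ_1/κ_2)(E_α(κ_2 t^α) − 1) for κ_2 ≠ 0, where E_α(z) = ∑_{i=0}^∞ z^i/Γ(αi+1) is the Mittag-Leffler function; equivalently E[X_t] = ∑_{i=0}^∞ κ_2^i (x_0 t^(αi)/Γ(αi+1) + κ_1 t^(α(i+1))/Γ(α(i+1)+1)). -/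

import Mathlib

open MeasureTheory

/-- The Mittag-Leffler function `E_α(z) = ∑_{i=0}^∞ z^i / Γ(αi+1)`. -/
noncomputable def mittagLeffler (α z : ℝ) : ℝ := ∑' i : ℕ, z ^ i / Real.Gamma (α * i + 1)

namespace VOU

open intervalIntegral Set

lemma gamma_shift_le {α x : ℝ} (hα0 : 0 < α) (hα1 : α ≤ 1) (hx : 0 < x) :
    Real.Gamma (x + 1) ≤ Real.Gamma (x + α) * (x + α) ^ (1 - α) := by
  rcases eq_or_lt_of_le hα1 with h1 | h1
  · subst h1
    simp [Real.rpow_zero]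
  · have key := Real.Gamma_mul_add_mul_le_rpow_Gamma_mul_rpow_Gamma
      (s := x + α) (t := x + 1 + α) (a := α) (b := 1 - α)
      (by linarith) (by linarith) hα0 (by linarith) (by ring)
    have harg : α * (x + α) + (1 - α) * (x + 1 + α) = x + 1 := by ring
    rw [harg] at key
    have hpos : (0:ℝ) < x + α := by linarith
    have hG : Real.Gamma (x + 1 + α) = (x + α) * Real.Gamma (x + α) := by
      have : x + 1 + α = (x + α) + 1 := by ring
      rw [this, Real.Gamma_add_one hpos.ne']
    rw [hG] at key
    have hGpos : 0 < Real.Gamma (x + α) := Real.Gamma_pos_of_pos hpos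
    calc Real.Gamma (x + 1) ≤ Real.Gamma (x + α) ^ α * ((x + α) * Real.Gamma (x + α)) ^ (1 - α) :=
          key
      _ = Real.Gamma (x + α) * (x + α) ^ (1 - α) := by
          rw [Real.mul_rpow hpos.le hGpos.le, ← mul_assoc,
            mul_comm (Real.Gamma (x + α) ^ α), mul_assoc, mul_comm (Real.Gamma (x+α) ^ α),
            ← Real.rpow_add hGpos]
          norm_num
          ring

lemma summable_ml {α : ℝ} (hα0 : 0 < α) (hα1 : α ≤ 1) (r c : ℝ) (hc : 0 ≤ c) :
    Summable (fun i : ℕ => r ^ i / Real.Gamma (α * i + c + 1)) := by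
  have hGpos : ∀ i : ℕ, 0 < Real.Gamma (α * i + c + 1) := by
    intro i
    apply Real.Gamma_pos_of_pos
    have : (0:ℝ) ≤ α * i := by positivity
    linarith
  apply summable_of_ratio_norm_eventually_le (r := 1/2) (by norm_num)
  -- choose N
  obtain ⟨N, hN⟩ := exists_nat_ge ((max 1 ((2 * |r| + 1) ^ (α⁻¹)) + 1) / α)
  filter_upwards [Filter.eventually_ge_atTop (N + 1)] with n hn
  set x : ℝ := α * n + c with hxdef
  have hxpos : 0 < x := by
    have : (1:ℝ) ≤ n := by exact_mod_cast Nat.one_le_iff_ne_zero.mpr (by omega)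
    nlinarith
  have hxα : 0 < x + α := by linarith
  -- x + α ≥ (2|r|+1)^(1/α)
  have hB : (2 * |r| + 1) ^ (α⁻¹) ≤ x + α := by
    have h1 : max 1 ((2 * |r| + 1) ^ (α⁻¹)) + 1 ≤ α * N := by
      rw [div_le_iff₀ hα0] at hN
      linarith [hN]
    have h2 : (α : ℝ) * N ≤ α * n := by
      have : (N:ℝ) ≤ n := by exact_mod_cast le_trans (Nat.le_succ N) hn
      nlinarith
    have := le_max_right 1 ((2 * |r| + 1) ^ (α⁻¹))
    have hc' : (0:ℝ) ≤ c := hc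
    simp only [hxdef]
    nlinarith
  have hpow : 2 * |r| + 1 ≤ (x + α) ^ α := by
    have h0 : (0:ℝ) ≤ (2 * |r| + 1) ^ (α⁻¹) := Real.rpow_nonneg (by positivity) _
    calc 2 * |r| + 1 = ((2 * |r| + 1) ^ (α⁻¹)) ^ α := by
          rw [Real.rpow_inv_rpow (by positivity) hα0.ne']
      _ ≤ (x + α) ^ α := Real.rpow_le_rpow h0 hB hα0.le
  -- Gamma bound
  have hkey : (2 * |r| + 1) * Real.Gamma (x + 1) ≤ Real.Gamma (x + α + 1) := by
    have h1 := gamma_shift_le hα0 hα1 hxpos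
    have h2 : Real.Gamma (x + α + 1) = (x + α) * Real.Gamma (x + α) := Real.Gamma_add_one hxα.ne'
    have hGp : 0 < Real.Gamma (x + α) := Real.Gamma_pos_of_pos hxα
    have h3 : Real.Gamma (x + 1) / (x + α) ^ (1 - α) ≤ Real.Gamma (x + α) := by
      rw [div_le_iff₀ (Real.rpow_pos_of_pos hxα _)]
      exact h1
    have h4 : (x + α) * (Real.Gamma (x + 1) / (x + α) ^ (1 - α)) =
        Real.Gamma (x + 1) * (x + α) ^ α := by
      have hx1 : (x + α) / (x + α) ^ (1 - α) = (x + α) ^ α := by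
        rw [div_eq_iff (Real.rpow_pos_of_pos hxα _).ne', ← Real.rpow_add hxα]
        norm_num
      rw [mul_comm (x + α), div_mul_eq_mul_div, mul_div_assoc, hx1]
    calc (2 * |r| + 1) * Real.Gamma (x + 1) ≤ (x + α) ^ α * Real.Gamma (x + 1) := by
          have hG1 : 0 < Real.Gamma (x + 1) := Real.Gamma_pos_of_pos (by linarith)
          nlinarith
      _ = (x + α) * (Real.Gamma (x + 1) / (x + α) ^ (1 - α)) := by rw [h4]; ring
      _ ≤ (x + α) * Real.Gamma (x + α) := by
          have := mul_le_mul_of_nonneg_left h3 hxα.le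
          linarith
      _ = Real.Gamma (x + α + 1) := h2.symm
  -- conclude ratio bound
  have hGx1 : 0 < Real.Gamma (x + 1) := Real.Gamma_pos_of_pos (by linarith)
  have hGxα1 : 0 < Real.Gamma (x + α + 1) := Real.Gamma_pos_of_pos (by linarith)
  have harg1 : α * (n + 1 : ℕ) + c + 1 = x + α + 1 := by push_cast; ring
  have harg0 : α * n + c + 1 = x + 1 := by rw [hxdef]
  rw [Real.norm_eq_abs, Real.norm_eq_abs, abs_div, abs_div, abs_pow, abs_pow, harg1, harg0,
    abs_of_pos hGx1, abs_of_pos hGxα1]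
  rw [div_le_iff₀ hGxα1, pow_succ]
  have h5 : 1 / 2 * (|r| ^ n / Real.Gamma (x + 1)) * Real.Gamma (x + α + 1)
      = |r| ^ n * (Real.Gamma (x + α + 1) / (2 * Real.Gamma (x + 1))) := by ring
  rw [h5]
  have h6 : |r| ≤ Real.Gamma (x + α + 1) / (2 * Real.Gamma (x + 1)) := by
    rw [le_div_iff₀ (by positivity)]
    nlinarith
  have h7 : (0:ℝ) ≤ |r| ^ n := by positivity
  nlinarith

lemma betaIntegrable {p q : ℝ} (hp : 0 < p) (hq : 0 < q) :
    IntervalIntegrable (fun x : ℝ => x ^ (p - 1) * (1 - x) ^ (q - 1)) volume 0 1 := by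
  have h1 : IntervalIntegrable (fun x : ℝ => x ^ (p - 1) * (1 - x) ^ (q - 1)) volume 0 (1/2) := by
    apply IntervalIntegrable.mul_continuousOn (intervalIntegrable_rpow' (by linarith))
    apply ContinuousOn.rpow_const (by fun_prop)
    intro x hx
    left
    rw [Set.uIcc_of_le (by norm_num)] at hx
    have := hx.2
    intro h
    rw [sub_eq_zero] at h
    norm_num [← h] at this
  have h2 : IntervalIntegrable (fun x : ℝ => x ^ (p - 1) * (1 - x) ^ (q - 1)) volume (1/2) 1 := by
    apply IntervalIntegrable.continuousOn_mul (g := fun x : ℝ => x ^ (p-1))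
      (f := fun x : ℝ => (1 - x) ^ (q - 1))
    · have := (intervalIntegrable_rpow' (r := q - 1) (a := 0) (b := 1/2)
        (by linarith)).comp_sub_left 1
      norm_num at this
      exact this.symm
    · apply ContinuousOn.rpow_const (by fun_prop)
      intro x hx
      left
      rw [Set.uIcc_of_le (by norm_num)] at hx
      have := hx.1
      positivity
  exact h1.trans h2

lemma betaIntegral_real {p q : ℝ} (hp : 0 < p) (hq : 0 < q) :
    ∫ x in (0:ℝ)..1, x ^ (p - 1) * (1 - x) ^ (q - 1)
      = Real.Gamma p * Real.Gamma q / Real.Gamma (p + q) := by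
  have key := Complex.Gamma_mul_Gamma_eq_betaIntegral (s := (p:ℂ)) (t := (q:ℂ))
    (by simpa using hp) (by simpa using hq)
  have hbeta : Complex.betaIntegral p q
      = ((∫ x in (0:ℝ)..1, x ^ (p - 1) * (1 - x) ^ (q - 1) : ℝ) : ℂ) := by
    rw [Complex.betaIntegral, ← intervalIntegral.integral_ofReal]
    apply intervalIntegral.integral_congr
    intro x hx
    rw [Set.uIcc_of_le (by norm_num)] at hx
    have h0 : (0:ℝ) ≤ x := hx.1
    have h1 : (0:ℝ) ≤ 1 - x := by linarith [hx.2]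
    push_cast
    rw [Complex.ofReal_cpow h0, Complex.ofReal_cpow h1]
    push_cast
    ring
  rw [hbeta] at key
  have hGpq : Complex.Gamma ((p:ℂ) + q) = ((Real.Gamma (p + q) : ℝ) : ℂ) := by
    rw [← Complex.ofReal_add, Complex.Gamma_ofReal]
  rw [hGpq, Complex.Gamma_ofReal, Complex.Gamma_ofReal,
    ← Complex.ofReal_mul, ← Complex.ofReal_mul] at key
  have := Complex.ofReal_injective key
  have hG : 0 < Real.Gamma (p + q) := Real.Gamma_pos_of_pos (by linarith)
  field_simp
  linarith [this]

lemma kernelIntegrable {α : ℝ} (hα0 : 0 < α) {t c : ℝ} (ht : 0 ≤ t) (hc : 0 ≤ c) :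
    IntervalIntegrable (fun s : ℝ => (t - s) ^ (α - 1) * s ^ c) volume 0 t := by
  apply IntervalIntegrable.mul_continuousOn
  · have := (intervalIntegrable_rpow' (r := α - 1) (a := 0) (b := t)
      (by linarith)).comp_sub_left t
    simpa using this.symm
  · intro x _
    apply ContinuousAt.continuousWithinAt
    exact Real.continuousAt_rpow_const x c (Or.inr hc)

lemma kernelIntegral {α : ℝ} (hα0 : 0 < α) {t c : ℝ} (ht : 0 ≤ t) (hc : 0 ≤ c) :
    ∫ s in (0:ℝ)..t, (t - s) ^ (α - 1) * s ^ c
      = Real.Gamma α * Real.Gamma (c + 1) / Real.Gamma (α + c + 1) * t ^ (α + c) := by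
  rcases eq_or_lt_of_le ht with h0 | h0
  · rw [← h0]
    rw [intervalIntegral.integral_same, Real.zero_rpow (by positivity), mul_zero]
  · have key := intervalIntegral.smul_integral_comp_mul_left
      (f := fun s : ℝ => (t - s) ^ (α - 1) * s ^ c) (a := 0) (b := 1) t
    rw [mul_zero, mul_one] at key
    rw [← key]
    have hcongr : ∫ u in (0:ℝ)..1, (t - t * u) ^ (α - 1) * (t * u) ^ c
        = ∫ u in (0:ℝ)..1, (t ^ (α - 1) * t ^ c) * (u ^ c * (1 - u) ^ (α - 1)) := by
      apply intervalIntegral.integral_congr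
      intro u hu
      rw [Set.uIcc_of_le (by norm_num)] at hu
      have hu0 : 0 ≤ u := hu.1
      have hu1 : 0 ≤ 1 - u := by linarith [hu.2]
      have e1 : t - t * u = t * (1 - u) := by ring
      dsimp only
      rw [e1, Real.mul_rpow h0.le hu1, Real.mul_rpow h0.le hu0]
      ring
    rw [hcongr, intervalIntegral.integral_const_mul]
    have hbeta : ∫ u in (0:ℝ)..1, u ^ c * (1 - u) ^ (α - 1)
        = Real.Gamma (c + 1) * Real.Gamma α / Real.Gamma (c + 1 + α) := by
      have := betaIntegral_real (p := c + 1) (q := α) (by linarith) hα0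
      simpa using this
    rw [hbeta]
    rw [smul_eq_mul]
    have e2 : t ^ (α - 1) * t ^ c = t ^ (α - 1 + c) := (Real.rpow_add h0 _ _).symm
    have e3 : t * t ^ (α - 1 + c) = t ^ (α + c) := by
      nth_rewrite 1 [← Real.rpow_one t]
      rw [← Real.rpow_add h0]
      ring_nf
    have e4 : Real.Gamma (c + 1 + α) = Real.Gamma (α + c + 1) := by ring_nf
    rw [e2, e4]
    rw [← mul_assoc, e3]
    ring

/-- The `i`-th term of the Mittag-Leffler series solution. -/
noncomputable def mlf (α x₀ κ₁ κ₂ : ℝ) (i : ℕ) (t : ℝ) : ℝ :=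
  κ₂ ^ i * (x₀ * t ^ (α * i) / Real.Gamma (α * i + 1)
    + κ₁ * t ^ (α * (i + 1)) / Real.Gamma (α * (i + 1) + 1))

/-- Summable bound for `mlf` on `[0, R]`. -/
noncomputable def mlb (α x₀ κ₁ κ₂ R : ℝ) (i : ℕ) : ℝ :=
  |x₀| * ((|κ₂| * R) ^ i / Real.Gamma (α * i + 1))
    + |κ₁| * R * ((|κ₂| * R) ^ i / Real.Gamma (α * i + α + 1))

variable {α : ℝ}

lemma gamma_arg_pos (hα0 : 0 < α) (i : ℕ) {c : ℝ} (hc : 0 ≤ c) : 0 < α * i + c + 1 := by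
  have : (0:ℝ) ≤ α * i := by positivity
  linarith

lemma summable_mlb (hα0 : 0 < α) (hα1 : α ≤ 1) (x₀ κ₁ κ₂ R : ℝ) :
    Summable (mlb α x₀ κ₁ κ₂ R) := by
  unfold mlb
  apply Summable.add
  · apply Summable.mul_left
    have := summable_ml hα0 hα1 (|κ₂| * R) 0 le_rfl
    simpa using this
  · apply Summable.mul_left
    exact summable_ml hα0 hα1 (|κ₂| * R) α hα0.le

lemma mlb_nonneg (hα0 : 0 < α) (x₀ κ₁ κ₂ R : ℝ) (hR : 0 ≤ R) (i : ℕ) :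
    0 ≤ mlb α x₀ κ₁ κ₂ R i := by
  unfold mlb
  have h1 := (gamma_arg_pos hα0 i (le_refl (0:ℝ)))
  have g1 : 0 < Real.Gamma (α * i + 1) := Real.Gamma_pos_of_pos (by linarith)
  have g2 : 0 < Real.Gamma (α * i + α + 1) := Real.Gamma_pos_of_pos (by linarith)
  positivity

lemma mlf_le_mlb (hα0 : 0 < α) (hα1 : α ≤ 1) (x₀ κ₁ κ₂ R : ℝ) (hR : 1 ≤ R) (i : ℕ)
    {t : ℝ} (ht : t ∈ Set.Icc 0 R) : |mlf α x₀ κ₁ κ₂ i t| ≤ mlb α x₀ κ₁ κ₂ R i := by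
  obtain ⟨ht0, htR⟩ := ht
  have g1 : 0 < Real.Gamma (α * i + 1) := Real.Gamma_pos_of_pos (by positivity)
  have harg : α * ((i : ℝ) + 1) = α * i + α := by ring
  have g2 : 0 < Real.Gamma (α * (i + 1) + 1) := by
    push_cast
    rw [harg]
    apply Real.Gamma_pos_of_pos
    have : (0:ℝ) ≤ α * i := by positivity
    linarith
  have hpow1 : t ^ (α * i) ≤ R ^ (i : ℕ) := by
    calc t ^ (α * i) ≤ R ^ (α * i) :=
          Real.rpow_le_rpow ht0 htR (by positivity)
      _ ≤ R ^ ((i : ℕ) : ℝ) := by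
          apply Real.rpow_le_rpow_of_exponent_le hR
          have : (0:ℝ) ≤ i := by positivity
          nlinarith
      _ = R ^ (i : ℕ) := Real.rpow_natCast R i
  have hpow2 : t ^ (α * (i + 1)) ≤ R * R ^ (i : ℕ) := by
    calc t ^ (α * (i + 1)) ≤ R ^ (α * (i + 1)) :=
          Real.rpow_le_rpow ht0 htR (by positivity)
      _ ≤ R ^ (((i : ℕ) + 1 : ℕ) : ℝ) := by
          apply Real.rpow_le_rpow_of_exponent_le hR
          push_cast
          have : (0:ℝ) ≤ (i:ℝ) + 1 := by positivity
          nlinarith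
      _ = R ^ ((i : ℕ) + 1) := Real.rpow_natCast R (i + 1)
      _ = R * R ^ (i : ℕ) := by rw [pow_succ]; ring
  have htp1 : 0 ≤ t ^ (α * i) := Real.rpow_nonneg ht0 _
  have htp2 : 0 ≤ t ^ (α * (i + 1)) := Real.rpow_nonneg ht0 _
  have hR0 : (0:ℝ) ≤ R := by linarith
  unfold mlf mlb
  have habs : |κ₂ ^ i * (x₀ * t ^ (α * i) / Real.Gamma (α * i + 1)
      + κ₁ * t ^ (α * (i + 1)) / Real.Gamma (α * (i + 1) + 1))|
      ≤ |κ₂| ^ i * (|x₀| * t ^ (α * i) / Real.Gamma (α * i + 1)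
      + |κ₁| * t ^ (α * (i + 1)) / Real.Gamma (α * (i + 1) + 1)) := by
    rw [abs_mul, abs_pow]
    apply mul_le_mul_of_nonneg_left _ (by positivity)
    refine (abs_add_le _ _).trans ?_
    apply add_le_add
    · rw [abs_div, abs_mul, abs_of_pos g1, abs_of_nonneg htp1]
    · rw [abs_div, abs_mul, abs_of_pos g2, abs_of_nonneg htp2]
  refine habs.trans ?_
  have e2 : Real.Gamma (α * (i+1) + 1) = Real.Gamma (α * i + α + 1) := by
    push_cast
    rw [harg]
  rw [e2, mul_add, mul_pow]
  apply add_le_add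
  · rw [show |κ₂| ^ i * (|x₀| * t ^ (α * i) / Real.Gamma (α * i + 1))
        = (|κ₂| ^ i * |x₀| * t ^ (α * i)) / Real.Gamma (α * i + 1) from by ring,
      show |x₀| * (|κ₂| ^ i * R ^ i / Real.Gamma (α * i + 1))
        = (|x₀| * (|κ₂| ^ i * R ^ i)) / Real.Gamma (α * i + 1) from by ring]
    rw [div_le_div_iff_of_pos_right g1]
    have h := mul_le_mul_of_nonneg_left hpow1
      (mul_nonneg (pow_nonneg (abs_nonneg κ₂) i) (abs_nonneg x₀))
    nlinarith
  · rw [show |κ₂| ^ i * (|κ₁| * t ^ (α * (i + 1)) / Real.Gamma (α * i + α + 1))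
        = (|κ₂| ^ i * |κ₁| * t ^ (α * (i + 1))) / Real.Gamma (α * i + α + 1) from by ring,
      show |κ₁| * R * (|κ₂| ^ i * R ^ i / Real.Gamma (α * i + α + 1))
        = (|κ₁| * R * (|κ₂| ^ i * R ^ i)) / Real.Gamma (α * i + α + 1) from by ring]
    rw [div_le_div_iff_of_pos_right (by rwa [← e2])]
    have h := mul_le_mul_of_nonneg_left hpow2
      (mul_nonneg (pow_nonneg (abs_nonneg κ₂) i) (abs_nonneg κ₁))
    nlinarith

lemma continuous_mlf (hα0 : 0 < α) (x₀ κ₁ κ₂ : ℝ) (i : ℕ) :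
    Continuous (fun t => mlf α x₀ κ₁ κ₂ i t) := by
  unfold mlf
  have h1 : Continuous (fun t : ℝ => t ^ (α * i)) :=
    continuous_iff_continuousAt.mpr fun x =>
      Real.continuousAt_rpow_const x _ (Or.inr (by positivity))
  have h2 : Continuous (fun t : ℝ => t ^ (α * (i + 1))) :=
    continuous_iff_continuousAt.mpr fun x =>
      Real.continuousAt_rpow_const x _ (Or.inr (by positivity))
  exact continuous_const.mul (((continuous_const.mul h1).div_const _).add
    ((continuous_const.mul h2).div_const _))

lemma volterra_unique (hα0 : 0 < α) {T κ₂ : ℝ} (hT : 0 < T) (d : ℝ → ℝ)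
    (hd : ContinuousOn d (Set.Icc 0 T))
    (heq : ∀ t ∈ Set.Icc (0:ℝ) T,
      d t = ∫ s in (0:ℝ)..t, (t - s) ^ (α - 1) / Real.Gamma α * (κ₂ * d s)) :
    ∀ t ∈ Set.Icc (0:ℝ) T, d t = 0 := by
  have hGα : 0 < Real.Gamma α := Real.Gamma_pos_of_pos hα0
  obtain ⟨τ, hτ0, hτ⟩ : ∃ τ : ℝ, 0 < τ ∧ |κ₂| / (Real.Gamma α * α) * τ ^ α ≤ 1/2 := by
    rcases eq_or_ne κ₂ 0 with h | h
    · exact ⟨1, one_pos, by simp [h]⟩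
    · have hcpos : 0 < |κ₂| / (Real.Gamma α * α) := by
        apply div_pos (abs_pos.mpr h) (by positivity)
      set c := |κ₂| / (Real.Gamma α * α)
      refine ⟨(1/(2*c)) ^ (α⁻¹), Real.rpow_pos_of_pos (by positivity) _, ?_⟩
      rw [Real.rpow_inv_rpow (by positivity) hα0.ne']
      exact le_of_eq (by field_simp)
  -- the key stepping lemma
  have step : ∀ a b : ℝ, 0 ≤ a → a ≤ b → b ≤ T → b - a ≤ τ →
      (∀ s ∈ Set.Icc (0:ℝ) a, d s = 0) → ∀ t ∈ Set.Icc (0:ℝ) b, d t = 0 := by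
    intro a b ha0 hab hbT hbaτ hzero
    have hb0 : (0:ℝ) ≤ b := le_trans ha0 hab
    obtain ⟨z, hz, hmax⟩ := isCompact_Icc.exists_isMaxOn (α := ℝ) (s := Set.Icc (0:ℝ) b)
      (Set.nonempty_Icc.mpr hb0)
      ((hd.mono (Set.Icc_subset_Icc le_rfl hbT)).abs)
    set C := |d z| with hC
    have hC0 : 0 ≤ C := abs_nonneg _
    have claim : ∀ t ∈ Set.Icc (0:ℝ) b, |d t| ≤ C / 2 := by
      intro t ht
      by_cases hta : t ≤ a
      · rw [hzero t ⟨ht.1, hta⟩]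
        simp
        positivity
      push_neg at hta
      have ht0 : (0:ℝ) ≤ t := ht.1
      have htT : t ≤ T := le_trans ht.2 hbT
      have hat : a ≤ t := hta.le
      -- integrability of the full integrand on [0, t]
      have hkint : ∀ u v : ℝ, 0 ≤ u → u ≤ v → v ≤ t →
          IntervalIntegrable (fun s => (t - s) ^ (α - 1)) volume u v := by
        intro u v hu huv hvt
        have base : IntervalIntegrable (fun x : ℝ => x ^ (α - 1)) volume (t - v) (t - u) := by
          apply IntervalIntegrable.mono_set
            (intervalIntegrable_rpow' (r := α - 1) (a := 0) (b := t) (by linarith))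
          rw [Set.uIcc_of_le (by linarith), Set.uIcc_of_le (by linarith)]
          exact Set.Icc_subset_Icc (by linarith) (by linarith)
        have := base.comp_sub_left t
        simpa using this.symm
      have hFint : ∀ u v : ℝ, 0 ≤ u → u ≤ v → v ≤ t →
          IntervalIntegrable (fun s => (t - s) ^ (α - 1) / Real.Gamma α * (κ₂ * d s))
            volume u v := by
        intro u v hu huv hvt
        apply IntervalIntegrable.mul_continuousOn ((hkint u v hu huv hvt).div_const _)
        apply ContinuousOn.mul continuousOn_const
        apply hd.mono
        rw [Set.uIcc_of_le huv]
        exact Set.Icc_subset_Icc hu (by linarith)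
      have hsplit := intervalIntegral.integral_add_adjacent_intervals
        (hFint 0 a le_rfl ha0 hat) (hFint a t ha0 hat le_rfl)
      have hfirst : (∫ s in (0:ℝ)..a, (t - s) ^ (α - 1) / Real.Gamma α * (κ₂ * d s)) = 0 := by
        have hcongr0 : (∫ s in (0:ℝ)..a, (t - s) ^ (α - 1) / Real.Gamma α * (κ₂ * d s))
            = ∫ s in (0:ℝ)..a, (0:ℝ) := by
          apply intervalIntegral.integral_congr
          intro s hs
          rw [Set.uIcc_of_le ha0] at hs
          dsimp only
          rw [hzero s hs]
          simp
        rw [hcongr0, intervalIntegral.integral_zero]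
      -- bound the second integral
      have hbound : ‖∫ s in a..t, (t - s) ^ (α - 1) / Real.Gamma α * (κ₂ * d s)‖
          ≤ |∫ s in a..t, (t - s) ^ (α - 1) * (|κ₂| * C / Real.Gamma α)| := by
        apply intervalIntegral.norm_integral_le_abs_of_norm_le
        · rw [Set.uIoc_of_le hat]
          apply Filter.Eventually.mono (ae_restrict_mem measurableSet_Ioc)
          intro s hs
          have hs0 : (0:ℝ) ≤ s := le_trans ha0 hs.1.le
          have hst : s ≤ t := hs.2
          have hts : 0 ≤ t - s := by linarith
          have hrp : 0 ≤ (t - s) ^ (α - 1) := Real.rpow_nonneg hts _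
          have hds : |d s| ≤ C := hmax ⟨hs0, le_trans hst ht.2⟩
          rw [Real.norm_eq_abs, abs_mul, abs_mul, abs_div, abs_of_nonneg hrp,
            abs_of_pos hGα]
          rw [div_mul_eq_mul_div, mul_div_assoc, mul_div_assoc]
          apply mul_le_mul_of_nonneg_left _ hrp
          rw [mul_div_assoc]
          exact mul_le_mul_of_nonneg_left ((div_le_div_iff_of_pos_right hGα).mpr hds) (abs_nonneg κ₂)
        · exact ((hkint a t ha0 hat le_rfl).mul_const _)
      have hval : (∫ s in a..t, (t - s) ^ (α - 1) * (|κ₂| * C / Real.Gamma α))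
          = (t - a) ^ α / α * (|κ₂| * C / Real.Gamma α) := by
        rw [intervalIntegral.integral_mul_const]
        congr 1
        have hcs := intervalIntegral.integral_comp_sub_left
          (a := a) (b := t) (fun x : ℝ => x ^ (α - 1)) t
        rw [hcs, sub_self]
        rw [integral_rpow (Or.inl (by linarith))]
        rw [Real.zero_rpow (by intro h; linarith : α - 1 + 1 ≠ 0)]
        rw [show α - 1 + 1 = α from by ring]
        ring
      have hrw : |d t| ≤ (t - a) ^ α / α * (|κ₂| * C / Real.Gamma α) := by
        calc |d t| = |∫ s in a..t, (t - s) ^ (α - 1) / Real.Gamma α * (κ₂ * d s)| := by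
              rw [heq t ⟨ht0, htT⟩, ← hsplit, hfirst, zero_add]
          _ = ‖∫ s in a..t, (t - s) ^ (α - 1) / Real.Gamma α * (κ₂ * d s)‖ :=
              (Real.norm_eq_abs _).symm
          _ ≤ |∫ s in a..t, (t - s) ^ (α - 1) * (|κ₂| * C / Real.Gamma α)| := hbound
          _ = |(t - a) ^ α / α * (|κ₂| * C / Real.Gamma α)| := by rw [hval]
          _ = (t - a) ^ α / α * (|κ₂| * C / Real.Gamma α) := by
              apply abs_of_nonneg
              have : (0:ℝ) ≤ (t - a) ^ α := Real.rpow_nonneg (by linarith) _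
              positivity
      have hfin : (t - a) ^ α / α * (|κ₂| * C / Real.Gamma α)
          ≤ |κ₂| / (Real.Gamma α * α) * τ ^ α * C := by
        have h1 : (t - a) ^ α ≤ τ ^ α :=
          Real.rpow_le_rpow (by linarith) (by linarith [ht.2]) hα0.le
        have h2 : (0:ℝ) ≤ τ ^ α := Real.rpow_nonneg hτ0.le _
        have e : |κ₂| / (Real.Gamma α * α) * τ ^ α * C
            = τ ^ α / α * (|κ₂| * C / Real.Gamma α) := by
          field_simp
        rw [e]
        apply mul_le_mul_of_nonneg_right _ (by positivity)
        exact (div_le_div_iff_of_pos_right hα0).mpr h1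
      have hlast : |κ₂| / (Real.Gamma α * α) * τ ^ α * C ≤ 1/2 * C :=
        mul_le_mul_of_nonneg_right hτ hC0
      linarith [hrw.trans hfin]
    have hCle : C ≤ C / 2 := by
      have := claim z hz
      rwa [← hC] at this
    intro t ht
    have h1 := claim t ht
    have h2 : |d t| ≤ 0 := by linarith
    exact abs_eq_zero.mp (le_antisymm h2 (abs_nonneg _))
  -- induction on steps of size τ
  have main : ∀ n : ℕ, ∀ t ∈ Set.Icc (0:ℝ) (min ((n : ℝ) * τ) T), d t = 0 := by
    intro n
    induction n with
    | zero =>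
      intro t ht
      rw [Nat.cast_zero, zero_mul, min_eq_left hT.le] at ht
      have ht0 : t = 0 := le_antisymm ht.2 ht.1
      subst ht0
      have h00 := heq 0 ⟨le_rfl, hT.le⟩
      simpa using h00
    | succ n ih =>
      have hcast : ((n + 1 : ℕ) : ℝ) = (n : ℝ) + 1 := by push_cast; ring
      apply step (min ((n : ℝ) * τ) T) (min (((n + 1 : ℕ) : ℝ) * τ) T)
      · exact le_min (by positivity) hT.le
      · apply min_le_min _ le_rfl
        rw [hcast]
        nlinarith
      · exact min_le_right _ _
      · have hexp : (((n:ℝ)) + 1) * τ = (n:ℝ) * τ + τ := by ring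
        rw [hcast]
        rcases le_total ((n : ℝ) * τ) T with h | h
        · rw [min_eq_left h]
          have h1 : min (((n:ℝ) + 1) * τ) T ≤ ((n:ℝ) + 1) * τ := min_le_left _ _
          linarith
        · rw [min_eq_right h, min_eq_right (by linarith : T ≤ ((n:ℝ) + 1) * τ)]
          linarith
      · exact ih
  intro t ht
  obtain ⟨n, hn⟩ := exists_nat_ge (T / τ)
  have hTn : T ≤ (n : ℝ) * τ := by
    rw [div_le_iff₀ hτ0] at hn
    linarith
  exact main n t (by rwa [min_eq_right hTn])

lemma kernel_only_integrable (hα0 : 0 < α) {t : ℝ} (ht : 0 ≤ t) :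
    IntervalIntegrable (fun s : ℝ => (t - s) ^ (α - 1)) volume 0 t := by
  have := (intervalIntegrable_rpow' (r := α - 1) (a := 0) (b := t)
    (by linarith)).comp_sub_left t
  simpa using this.symm

lemma mlf_summable (hα0 : 0 < α) (hα1 : α ≤ 1) (x₀ κ₁ κ₂ R : ℝ) (hR : 1 ≤ R)
    {u : ℝ} (hu : u ∈ Set.Icc 0 R) : Summable (fun i => mlf α x₀ κ₁ κ₂ i u) := by
  apply Summable.of_norm_bounded (summable_mlb hα0 hα1 x₀ κ₁ κ₂ R)
  intro i
  rw [Real.norm_eq_abs]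
  exact mlf_le_mlb hα0 hα1 x₀ κ₁ κ₂ R hR i hu

lemma mlf_zero_eq (hα0 : 0 < α) (x₀ κ₁ κ₂ : ℝ) :
    (∑' i, mlf α x₀ κ₁ κ₂ i 0) = x₀ := by
  rw [tsum_eq_single 0]
  · norm_num [mlf, Real.zero_rpow hα0.ne', Real.Gamma_one]
  · intro i hi
    have hi1 : 1 ≤ i := Nat.one_le_iff_ne_zero.mpr hi
    simp only [mlf]
    rw [Real.zero_rpow, Real.zero_rpow]
    · simp
    · have : (0:ℝ) < (i:ℝ) + 1 := by positivity
      positivity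
    · have : (1:ℝ) ≤ (i:ℝ) := by exact_mod_cast hi1
      positivity

lemma volterra_exists (hα0 : 0 < α) (hα1 : α ≤ 1) (x₀ κ₁ κ₂ : ℝ) {t : ℝ} (ht : 0 ≤ t) :
    (∑' i, mlf α x₀ κ₁ κ₂ i t) = x₀ + ∫ s in (0:ℝ)..t,
      (t - s) ^ (α - 1) / Real.Gamma α * (κ₁ + κ₂ * ∑' i, mlf α x₀ κ₁ κ₂ i s) := by
  have hGα : 0 < Real.Gamma α := Real.Gamma_pos_of_pos hα0
  have hGα1 : 0 < Real.Gamma (α + 1) :=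
    Real.Gamma_pos_of_pos (by linarith)
  set R : ℝ := max 1 t with hRdef
  have hR : 1 ≤ R := le_max_left _ _
  have htR : t ≤ R := le_max_right _ _
  set M : ℝ → ℝ := fun u => ∑' i, mlf α x₀ κ₁ κ₂ i u with hM
  have hMcont : ContinuousOn M (Set.Icc 0 R) := by
    apply continuousOn_tsum (u := mlb α x₀ κ₁ κ₂ R)
      (fun i => (continuous_mlf hα0 x₀ κ₁ κ₂ i).continuousOn)
      (summable_mlb hα0 hα1 x₀ κ₁ κ₂ R)
    intro n x hx
    rw [Real.norm_eq_abs]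
    exact mlf_le_mlb hα0 hα1 x₀ κ₁ κ₂ R hR n hx
  -- the integrand as a series
  set F : ℕ → ℝ → ℝ := fun i s => (t - s) ^ (α - 1) / Real.Gamma α * (κ₂ * mlf α x₀ κ₁ κ₂ i s)
    with hF
  -- term-by-term integral
  have hBterm : ∀ i : ℕ, (∫ s in (0:ℝ)..t, F i s) = mlf α x₀ κ₁ κ₂ (i + 1) t := by
    intro i
    have hc1 : (0:ℝ) ≤ α * i := by positivity
    have hc2 : (0:ℝ) ≤ α * ((i:ℝ) + 1) := by positivity
    have hk1 := kernelIntegrable hα0 ht hc1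
    have hk2 := kernelIntegrable hα0 ht hc2
    have hcongr : (∫ s in (0:ℝ)..t, F i s)
        = ∫ s in (0:ℝ)..t,
            (κ₂ ^ (i+1) * x₀ / (Real.Gamma α * Real.Gamma (α * i + 1)))
              * ((t - s) ^ (α - 1) * s ^ (α * (i:ℝ)))
            + (κ₂ ^ (i+1) * κ₁ / (Real.Gamma α * Real.Gamma (α * ((i:ℝ) + 1) + 1)))
              * ((t - s) ^ (α - 1) * s ^ (α * ((i:ℝ) + 1))) := by
      apply intervalIntegral.integral_congr
      intro s _
      simp only [hF, mlf]
      push_cast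
      ring
    rw [hcongr, intervalIntegral.integral_add (hk1.const_mul _) (hk2.const_mul _),
      intervalIntegral.integral_const_mul, intervalIntegral.integral_const_mul,
      kernelIntegral hα0 ht hc1, kernelIntegral hα0 ht hc2]
    have g1 : 0 < Real.Gamma (α * i + 1) := Real.Gamma_pos_of_pos (by linarith)
    have g2 : 0 < Real.Gamma (α * ((i:ℝ) + 1) + 1) := Real.Gamma_pos_of_pos (by nlinarith)
    have g3 : 0 < Real.Gamma (α + α * i + 1) := Real.Gamma_pos_of_pos (by linarith)
    have g4 : 0 < Real.Gamma (α + α * ((i:ℝ) + 1) + 1) := Real.Gamma_pos_of_pos (by nlinarith)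
    simp only [mlf]
    push_cast
    have e1 : α * ((i:ℝ) + 1) = α + α * i := by ring
    have e2 : α * ((i:ℝ) + 1 + 1) = α + α * ((i:ℝ) + 1) := by ring
    rw [e2, e1]
    rw [e1] at g2
    field_simp
  -- integrability of each term
  have hFint : ∀ i : ℕ, IntervalIntegrable (F i) volume 0 t := by
    intro i
    apply IntervalIntegrable.mul_continuousOn ((kernel_only_integrable hα0 ht).div_const _)
    exact continuousOn_const.mul (continuous_mlf hα0 x₀ κ₁ κ₂ i).continuousOn
  rcases eq_or_lt_of_le ht with h0 | h0
  · rw [← h0, intervalIntegral.integral_same, mlf_zero_eq hα0, add_zero]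
  -- now t > 0
  -- swap sum and integral
  have hIoc : ∀ s ∈ Set.Ioc (0:ℝ) t, s ∈ Set.Icc (0:ℝ) R := fun s hs =>
    ⟨hs.1.le, le_trans hs.2 htR⟩
  have hK : IntegrableOn (fun s => (t - s) ^ (α - 1)) (Set.Ioc 0 t) volume := by
    rw [← intervalIntegrable_iff_integrableOn_Ioc_of_le ht]
    exact kernel_only_integrable hα0 ht
  have hswap : (∫ s in Set.Ioc (0:ℝ) t, ∑' i, F i s) = ∑' i, ∫ s in Set.Ioc (0:ℝ) t, F i s := by
    rw [← MeasureTheory.integral_tsum_of_summable_integral_norm]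
    · exact fun i => (intervalIntegrable_iff_integrableOn_Ioc_of_le ht).mp (hFint i)
    · -- summability of integrals of norms
      apply Summable.of_nonneg_of_le
        (fun i => integral_nonneg (fun s => norm_nonneg _))
        (fun i => ?_)
        (((summable_mlb hα0 hα1 x₀ κ₁ κ₂ R).mul_left (|κ₂| / Real.Gamma α)).mul_right
          (∫ s in Set.Ioc (0:ℝ) t, (t - s) ^ (α - 1)))
      have hptwise : ∀ᵐ s ∂(volume.restrict (Set.Ioc (0:ℝ) t)),
          ‖F i s‖ ≤ (|κ₂| / Real.Gamma α * mlb α x₀ κ₁ κ₂ R i) * (t - s) ^ (α - 1) := by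
        apply Filter.Eventually.mono (ae_restrict_mem measurableSet_Ioc)
        intro s hs
        have hts : 0 ≤ t - s := by linarith [hs.2]
        have hrp : 0 ≤ (t - s) ^ (α - 1) := Real.rpow_nonneg hts _
        have hmb := mlf_le_mlb hα0 hα1 x₀ κ₁ κ₂ R hR i (hIoc s hs)
        simp only [hF]
        rw [Real.norm_eq_abs, abs_mul, abs_mul, abs_div, abs_of_nonneg hrp, abs_of_pos hGα]
        calc (t - s) ^ (α - 1) / Real.Gamma α * (|κ₂| * |mlf α x₀ κ₁ κ₂ i s|)
            ≤ (t - s) ^ (α - 1) / Real.Gamma α * (|κ₂| * mlb α x₀ κ₁ κ₂ R i) := by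
              apply mul_le_mul_of_nonneg_left _ (by positivity)
              exact mul_le_mul_of_nonneg_left hmb (abs_nonneg _)
          _ = (|κ₂| / Real.Gamma α * mlb α x₀ κ₁ κ₂ R i) * (t - s) ^ (α - 1) := by ring
      calc (∫ s in Set.Ioc (0:ℝ) t, ‖F i s‖)
          ≤ ∫ s in Set.Ioc (0:ℝ) t,
              (|κ₂| / Real.Gamma α * mlb α x₀ κ₁ κ₂ R i) * (t - s) ^ (α - 1) := by
            apply integral_mono_of_nonneg (Filter.Eventually.of_forall fun s => norm_nonneg _)
              (hK.const_mul _) hptwise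
        _ = |κ₂| / Real.Gamma α * mlb α x₀ κ₁ κ₂ R i * ∫ s in Set.Ioc (0:ℝ) t,
              (t - s) ^ (α - 1) := by
            rw [MeasureTheory.integral_const_mul]
  -- main computation
  have hMint : IntervalIntegrable (fun s => (t - s) ^ (α - 1) / Real.Gamma α * (κ₂ * M s))
      volume 0 t := by
    apply IntervalIntegrable.mul_continuousOn ((kernel_only_integrable hα0 ht).div_const _)
    apply continuousOn_const.mul
    apply hMcont.mono
    rw [Set.uIcc_of_le ht]
    exact Set.Icc_subset_Icc le_rfl htR
  have hAint : IntervalIntegrable (fun s => (t - s) ^ (α - 1) / Real.Gamma α * κ₁)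
      volume 0 t := ((kernel_only_integrable hα0 ht).div_const _).mul_const _
  have hsplitI : (∫ s in (0:ℝ)..t, (t - s) ^ (α - 1) / Real.Gamma α * (κ₁ + κ₂ * M s))
      = (∫ s in (0:ℝ)..t, (t - s) ^ (α - 1) / Real.Gamma α * κ₁)
        + ∫ s in (0:ℝ)..t, (t - s) ^ (α - 1) / Real.Gamma α * (κ₂ * M s) := by
    rw [← intervalIntegral.integral_add hAint hMint]
    apply intervalIntegral.integral_congr
    intro s _
    ring
  have hA : (∫ s in (0:ℝ)..t, (t - s) ^ (α - 1) / Real.Gamma α * κ₁)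
      = κ₁ * t ^ α / Real.Gamma (α + 1) := by
    have hcongr : (∫ s in (0:ℝ)..t, (t - s) ^ (α - 1) / Real.Gamma α * κ₁)
        = ∫ s in (0:ℝ)..t, (κ₁ / Real.Gamma α) * ((t - s) ^ (α - 1) * s ^ (0:ℝ)) := by
      apply intervalIntegral.integral_congr
      intro s _
      dsimp only
      rw [Real.rpow_zero]
      ring
    rw [hcongr, intervalIntegral.integral_const_mul, kernelIntegral hα0 ht le_rfl]
    rw [show α + 0 + 1 = α + 1 from by ring, show (0:ℝ) + 1 = 1 from by norm_num,
      add_zero, Real.Gamma_one]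
    field_simp
  have hB : (∫ s in (0:ℝ)..t, (t - s) ^ (α - 1) / Real.Gamma α * (κ₂ * M s))
      = ∑' i, mlf α x₀ κ₁ κ₂ (i + 1) t := by
    have hptM : ∀ s : ℝ, (t - s) ^ (α - 1) / Real.Gamma α * (κ₂ * M s) = ∑' i, F i s := by
      intro s
      simp only [hM, hF]
      rw [← tsum_mul_left, ← tsum_mul_left]
    have hcongr : (∫ s in (0:ℝ)..t, (t - s) ^ (α - 1) / Real.Gamma α * (κ₂ * M s))
        = ∫ s in (0:ℝ)..t, ∑' i, F i s :=
      intervalIntegral.integral_congr fun s _ => hptM s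
    rw [hcongr, intervalIntegral.integral_of_le ht, hswap]
    apply tsum_congr
    intro i
    rw [← intervalIntegral.integral_of_le ht]
    exact hBterm i
  rw [hsplitI, hA, hB]
  -- reassemble the series
  have hsumt : Summable (fun i => mlf α x₀ κ₁ κ₂ i t) :=
    mlf_summable hα0 hα1 x₀ κ₁ κ₂ R hR ⟨ht, htR⟩
  rw [Summable.tsum_eq_zero_add hsumt]
  have h0t : mlf α x₀ κ₁ κ₂ 0 t = x₀ + κ₁ * t ^ α / Real.Gamma (α + 1) := by
    norm_num [mlf, Real.Gamma_one]
  rw [h0t]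
  ring


lemma ml_summable (hα0 : 0 < α) (hα1 : α ≤ 1) (z : ℝ) :
    Summable (fun i : ℕ => z ^ i / Real.Gamma (α * i + 1)) := by
  have := summable_ml hα0 hα1 z 0 le_rfl
  simpa using this

lemma mlsum_continuousOn (hα0 : 0 < α) (hα1 : α ≤ 1) (x₀ κ₁ κ₂ T : ℝ) :
    ContinuousOn (fun u => ∑' i, mlf α x₀ κ₁ κ₂ i u) (Set.Icc 0 T) := by
  apply ContinuousOn.mono (s := Set.Icc 0 (max 1 T))
  · apply continuousOn_tsum (u := mlb α x₀ κ₁ κ₂ (max 1 T))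
      (fun i => (continuous_mlf hα0 x₀ κ₁ κ₂ i).continuousOn)
      (summable_mlb hα0 hα1 x₀ κ₁ κ₂ (max 1 T))
    intro n x hx
    rw [Real.norm_eq_abs]
    exact mlf_le_mlb hα0 hα1 x₀ κ₁ κ₂ (max 1 T) (le_max_left _ _) n hx
  · exact Set.Icc_subset_Icc le_rfl (le_max_right _ _)

lemma ml_forms (hα0 : 0 < α) (hα1 : α ≤ 1) (x₀ κ₁ κ₂ : ℝ) (hκ : κ₂ ≠ 0)
    {t : ℝ} (ht : 0 ≤ t) :
    x₀ * mittagLeffler α (κ₂ * t ^ α) + κ₁ / κ₂ * (mittagLeffler α (κ₂ * t ^ α) - 1)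
      = ∑' i, mlf α x₀ κ₁ κ₂ i t := by
  set z : ℝ := κ₂ * t ^ α with hzdef
  have hz : ∀ i : ℕ, z ^ i = κ₂ ^ i * t ^ (α * i) := by
    intro i
    rw [hzdef, mul_pow, ← Real.rpow_natCast (t ^ α) i, ← Real.rpow_mul ht]
  have hEsum : Summable (fun i : ℕ => z ^ i / Real.Gamma (α * i + 1)) :=
    ml_summable hα0 hα1 z
  have htail : Summable (fun i : ℕ => z ^ (i + 1) / Real.Gamma (α * (i + 1 : ℕ) + 1)) :=
    (summable_nat_add_iff 1).mpr hEsum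
  have hsplit : mittagLeffler α z
      = 1 + ∑' i : ℕ, z ^ (i + 1) / Real.Gamma (α * (i + 1 : ℕ) + 1) := by
    rw [mittagLeffler, Summable.tsum_eq_zero_add hEsum]
    norm_num [Real.Gamma_one]
  have hterm : ∀ i : ℕ, mlf α x₀ κ₁ κ₂ i t
      = x₀ * (z ^ i / Real.Gamma (α * i + 1))
        + (κ₁ / κ₂) * (z ^ (i + 1) / Real.Gamma (α * (i + 1 : ℕ) + 1)) := by
    intro i
    rw [mlf, hz i, hz (i + 1)]
    push_cast
    have g2 : Real.Gamma (α * ((i:ℝ) + 1) + 1) ≠ 0 := by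
      apply (Real.Gamma_pos_of_pos _).ne'
      have : (0:ℝ) ≤ α * i := by positivity
      nlinarith
    field_simp
    ring
  have hrhs : (∑' i, mlf α x₀ κ₁ κ₂ i t)
      = x₀ * ∑' i : ℕ, z ^ i / Real.Gamma (α * i + 1)
        + (κ₁ / κ₂) * ∑' i : ℕ, z ^ (i + 1) / Real.Gamma (α * (i + 1 : ℕ) + 1) := by
    rw [← tsum_mul_left, ← tsum_mul_left, ← Summable.tsum_add (hEsum.mul_left x₀) (htail.mul_left _)]
    exact tsum_congr hterm
  rw [hrhs, ← mittagLeffler]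
  have : (∑' i : ℕ, z ^ (i + 1) / Real.Gamma (α * (i + 1 : ℕ) + 1))
      = mittagLeffler α z - 1 := by
    rw [hsplit]
    ring
  rw [this]

end VOU

open VOU

/-- The mean `m(t) = E[X_t]` of the Volterra Ornstein-Uhlenbeck process, characterized as the
(unique, continuous) solution of the fractional linear integral equation
`m(t) = x₀ + ∫_0^t ((t-s)^(α-1)/Γ(α))(κ₁ + κ₂ m(s)) ds`, is given by
`m(t) = x₀ E_α(κ₂ t^α) + (κ₁/κ₂)(E_α(κ₂ t^α) - 1)` and equivalently by the series
`∑_{i≥0} κ₂^i (x₀ t^(αi)/Γ(αi+1) + κ₁ t^(α(i+1))/Γ(α(i+1)+1))`. -/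
theorem stmt_4 (α x₀ κ₁ κ₂ T : ℝ) (hα : 1 / 2 < α) (hα1 : α ≤ 1) (hκ : κ₂ ≠ 0) (hT : 0 < T)
    (m : ℝ → ℝ) (hmc : ContinuousOn m (Set.Icc 0 T))
    (hm : ∀ t ∈ Set.Icc (0 : ℝ) T,
      m t = x₀ + ∫ s in (0 : ℝ)..t, (t - s) ^ (α - 1) / Real.Gamma α * (κ₁ + κ₂ * m s)) :
    ∀ t ∈ Set.Icc (0 : ℝ) T,
      m t = x₀ * mittagLeffler α (κ₂ * t ^ α)
              + κ₁ / κ₂ * (mittagLeffler α (κ₂ * t ^ α) - 1) ∧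
      m t = ∑' i : ℕ, κ₂ ^ i * (x₀ * t ^ (α * i) / Real.Gamma (α * i + 1)
              + κ₁ * t ^ (α * (i + 1)) / Real.Gamma (α * (i + 1) + 1)) := by
  have hα0 : 0 < α := by linarith
  have hGα : 0 < Real.Gamma α := Real.Gamma_pos_of_pos hα0
  set M : ℝ → ℝ := fun u => ∑' i, mlf α x₀ κ₁ κ₂ i u with hM
  have hMcont : ContinuousOn M (Set.Icc 0 T) := mlsum_continuousOn hα0 hα1 x₀ κ₁ κ₂ T
  set d : ℝ → ℝ := fun u => m u - M u with hd
  have hdeq : ∀ t ∈ Set.Icc (0:ℝ) T,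
      d t = ∫ s in (0:ℝ)..t, (t - s) ^ (α - 1) / Real.Gamma α * (κ₂ * d s) := by
    intro t htm
    obtain ⟨ht0, htT⟩ := htm
    have hsub : Set.uIcc (0:ℝ) t ⊆ Set.Icc 0 T := by
      rw [Set.uIcc_of_le ht0]
      exact Set.Icc_subset_Icc le_rfl htT
    have hint1 : IntervalIntegrable
        (fun s => (t - s) ^ (α - 1) / Real.Gamma α * (κ₁ + κ₂ * m s)) volume 0 t := by
      apply IntervalIntegrable.mul_continuousOn ((kernel_only_integrable hα0 ht0).div_const _)
      exact continuousOn_const.add (continuousOn_const.mul (hmc.mono hsub))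
    have hint2 : IntervalIntegrable
        (fun s => (t - s) ^ (α - 1) / Real.Gamma α * (κ₁ + κ₂ * M s)) volume 0 t := by
      apply IntervalIntegrable.mul_continuousOn ((kernel_only_integrable hα0 ht0).div_const _)
      exact continuousOn_const.add (continuousOn_const.mul (hMcont.mono hsub))
    have hMeq : M t = x₀ + ∫ s in (0:ℝ)..t,
        (t - s) ^ (α - 1) / Real.Gamma α * (κ₁ + κ₂ * M s) :=
      volterra_exists hα0 hα1 x₀ κ₁ κ₂ ht0
    have : d t = (x₀ + ∫ s in (0:ℝ)..t, (t - s) ^ (α - 1) / Real.Gamma α * (κ₁ + κ₂ * m s))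
        - (x₀ + ∫ s in (0:ℝ)..t, (t - s) ^ (α - 1) / Real.Gamma α * (κ₁ + κ₂ * M s)) := by
      rw [hd]
      dsimp only
      rw [← hm t ⟨ht0, htT⟩, ← hMeq]
    rw [this, add_sub_add_left_eq_sub]
    rw [← intervalIntegral.integral_sub hint1 hint2]
    have : (∫ s in (0:ℝ)..t, ((t - s) ^ (α - 1) / Real.Gamma α * (κ₁ + κ₂ * m s)
        - (t - s) ^ (α - 1) / Real.Gamma α * (κ₁ + κ₂ * M s)))
        = ∫ s in (0:ℝ)..t, (t - s) ^ (α - 1) / Real.Gamma α * (κ₂ * d s) := by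
      apply intervalIntegral.integral_congr
      intro s _
      dsimp only
      rw [hd]
      ring
    rw [this]
  have hdzero := volterra_unique hα0 hT d (hmc.sub hMcont) hdeq
  intro t htm
  have hmeqM : m t = M t := by
    have := hdzero t htm
    rw [hd] at this
    dsimp only at this
    linarith
  have h2 : m t = ∑' i : ℕ, κ₂ ^ i * (x₀ * t ^ (α * i) / Real.Gamma (α * i + 1)
      + κ₁ * t ^ (α * (i + 1)) / Real.Gamma (α * (i + 1) + 1)) := by
    rw [hmeqM, hM]
    simp only [mlf]
  refine ⟨?_, h2⟩
  rw [hmeqM, hM]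
  have := ml_forms hα0 hα1 x₀ κ₁ κ₂ hκ htm.1
  exact this.symm
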